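/- For integers V ≥ 1, p ≥ 2, real α with p < α ≤ p+1, and real C > 0 satisfying (α−1)·C ≥ α + 2·α·(α−1)⋯(α−p+1) and C^ℓ ≥ α·ℓ!/(α−ℓ) for ℓ = 2,…,p−1, one has (V + C)^(α−1) ≥ V^(α−1) + (α−1)·V^(α−2)·C + ∑_{ℓ=2}^{p−1} [(α−1)(α−2)⋯(α−ℓ)/ℓ!]·V^(α−ℓ−1)·C^ℓ. -/

import Mathlib

open Set Finset

/-- Iterated derivative of `x ↦ x ^ β` within a closed interval of positives. -/
lemma iteratedDerivWithin_rpow_aux {a b β : ℝ} (ha : 0 < a) (hab : a < b) :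
    ∀ n : ℕ, ∀ x ∈ Set.Icc a b,
      iteratedDerivWithin n (fun y : ℝ => y ^ β) (Set.Icc a b) x
        = (∏ j ∈ Finset.range n, (β - j)) * x ^ (β - n) := by
  have hs : UniqueDiffOn ℝ (Set.Icc a b) := uniqueDiffOn_Icc hab
  intro n
  induction n with
  | zero => intro x hx; simp
  | succ n ih =>
    intro x hx
    have hxpos : (0:ℝ) < x := lt_of_lt_of_le ha hx.1
    rw [iteratedDerivWithin_succ]
    have hcongr : Set.EqOn (iteratedDerivWithin n (fun y : ℝ => y ^ β) (Set.Icc a b))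
        (fun y : ℝ => (∏ j ∈ Finset.range n, (β - j)) * y ^ (β - n)) (Set.Icc a b) := by
      intro y hy; exact ih y hy
    rw [derivWithin_congr hcongr (hcongr hx)]
    have hderiv : HasDerivAt (fun y : ℝ => (∏ j ∈ Finset.range n, (β - j)) * y ^ (β - n))
        ((∏ j ∈ Finset.range n, (β - j)) * ((β - n) * x ^ (β - n - 1))) x := by
      exact (Real.hasDerivAt_rpow_const (Or.inl hxpos.ne')).const_mul _
    rw [hderiv.hasDerivWithinAt.derivWithin (hs x hx)]
    rw [Finset.prod_range_succ]
    rw [show β - (↑(n + 1) : ℝ) = β - n - 1 by push_cast; ring]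
    ring

theorem stmt5 (V p : ℕ) (hV : 1 ≤ V) (hp : 2 ≤ p) (α C : ℝ)
    (hαp : (p : ℝ) < α) (hαp1 : α ≤ (p : ℝ) + 1) (hC : 0 < C)
    (hC1 : (α - 1) * C ≥ α + 2 * ∏ j ∈ Finset.range p, (α - j))
    (hC2 : ∀ ℓ : ℕ, 2 ≤ ℓ → ℓ ≤ p - 1 → C ^ ℓ ≥ α * (Nat.factorial ℓ) / (α - ℓ)) :
    ((V : ℝ) + C) ^ (α - 1)
      ≥ (V : ℝ) ^ (α - 1) + (α - 1) * (V : ℝ) ^ (α - 2) * C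
        + ∑ ℓ ∈ Finset.Icc 2 (p - 1),
            (∏ j ∈ Finset.Icc 1 ℓ, (α - j)) / (Nat.factorial ℓ)
              * (V : ℝ) ^ (α - ℓ - 1) * C ^ ℓ := by
  set β : ℝ := α - 1 with hβ
  set a : ℝ := (V : ℝ) with hav
  set b : ℝ := (V : ℝ) + C with hbv
  have haV : (1:ℝ) ≤ a := by rw [hav]; exact_mod_cast hV
  have ha : (0:ℝ) < a := lt_of_lt_of_le one_pos haV
  have hab : a < b := by rw [hav, hbv]; linarith
  have hs : UniqueDiffOn ℝ (Set.Icc a b) := uniqueDiffOn_Icc hab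
  set n : ℕ := p - 1 with hn
  have hnp : n + 1 = p := by omega
  have key := iteratedDerivWithin_rpow_aux (β := β) ha hab
  -- smoothness
  have hf : ContDiffOn ℝ n (fun y : ℝ => y ^ β) (Set.Icc a b) := by
    intro x hx
    exact (Real.contDiffAt_rpow_const_of_ne (ne_of_gt (lt_of_lt_of_le ha hx.1))).contDiffWithinAt
  have hf' : DifferentiableOn ℝ
      (iteratedDerivWithin n (fun y : ℝ => y ^ β) (Set.Icc a b)) (Set.Ioo a b) := by
    intro x hx
    have hx' : x ∈ Set.Icc a b := Set.Ioo_subset_Icc_self hx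
    have hxpos : (0:ℝ) < x := lt_of_lt_of_le ha hx'.1
    have hd : DifferentiableAt ℝ
        (fun y : ℝ => (∏ j ∈ Finset.range n, (β - j)) * y ^ (β - n)) x :=
      ((Real.hasDerivAt_rpow_const (Or.inl hxpos.ne')).const_mul _).differentiableAt
    exact (hd.differentiableWithinAt).congr
      (fun y hy => key n y (Set.Ioo_subset_Icc_self hy)) (key n x hx')
  obtain ⟨x', hx', hT⟩ := taylor_mean_remainder_lagrange (f := fun y : ℝ => y ^ β) (x₀ := a)
    (x := b) (n := n) hab.ne (by rw [Set.uIcc_of_le hab.le]; exact hf)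
    (by rw [Set.uIcc_of_le hab.le, Set.uIoo_of_le hab.le]; exact hf')
  rw [Set.uIcc_of_le hab.le] at hT
  rw [Set.uIoo_of_le hab.le] at hx'
  -- remainder is nonnegative
  have hrem : 0 ≤ iteratedDerivWithin (n + 1) (fun y : ℝ => y ^ β) (Set.Icc a b) x'
      * (b - a) ^ (n + 1) / ((n + 1).factorial : ℝ) := by
    rw [key (n + 1) x' (Set.Ioo_subset_Icc_self hx')]
    have hx'pos : (0:ℝ) < x' := lt_of_lt_of_le ha (Set.Ioo_subset_Icc_self hx').1
    have hprod : 0 ≤ ∏ j ∈ Finset.range (n + 1), (β - j) := by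
      apply Finset.prod_nonneg
      intro j hj
      have hj' : (j:ℝ) ≤ (n:ℝ) := by
        exact_mod_cast Nat.lt_succ_iff.mp (Finset.mem_range.mp hj)
      have hnβ : (n:ℝ) < β := by
        have hcast : ((n:ℝ) + 1) = (p:ℝ) := by exact_mod_cast hnp
        rw [hβ]; linarith
      linarith
    have hba : 0 ≤ b - a := by linarith
    positivity
  have hmain : taylorWithinEval (fun y : ℝ => y ^ β) n (Set.Icc a b) a b ≤ b ^ β := by
    linarith [hrem, hT]
  -- compute the taylor polynomial
  have htaylor : taylorWithinEval (fun y : ℝ => y ^ β) n (Set.Icc a b) a b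
      = ∑ k ∈ Finset.range p, ((k.factorial : ℝ)⁻¹ * C ^ k)
          * ((∏ j ∈ Finset.range k, (β - j)) * a ^ (β - k)) := by
    rw [taylor_within_apply, hnp]
    apply Finset.sum_congr rfl
    intro k hk
    rw [key k a (Set.left_mem_Icc.mpr hab.le)]
    have hba : b - a = C := by rw [hav, hbv]; ring
    rw [hba, smul_eq_mul]
  -- split the sum
  have hsplit : ∑ k ∈ Finset.range p, ((k.factorial : ℝ)⁻¹ * C ^ k)
          * ((∏ j ∈ Finset.range k, (β - j)) * a ^ (β - k))
      = a ^ β + β * a ^ (β - 1) * C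
        + ∑ ℓ ∈ Finset.Icc 2 (p - 1),
            (∏ j ∈ Finset.Icc 1 ℓ, (α - j)) / (Nat.factorial ℓ)
              * a ^ (α - ℓ - 1) * C ^ ℓ := by
    rw [show Finset.range p = Finset.Ico 0 p by rw [Finset.range_eq_Ico],
      ← Finset.sum_Ico_consecutive _ (by omega : 0 ≤ 2) hp]
    have h01 : ∑ k ∈ Finset.Ico 0 2, ((k.factorial : ℝ)⁻¹ * C ^ k)
          * ((∏ j ∈ Finset.range k, (β - j)) * a ^ (β - k))
        = a ^ β + β * a ^ (β - 1) * C := by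
      rw [Nat.Ico_zero_eq_range, Finset.sum_range_succ, Finset.sum_range_one]
      norm_num [Nat.factorial]
      ring
    rw [h01]
    congr 1
    have hIcc : Finset.Icc 2 (p - 1) = Finset.Ico 2 p := by
      rw [← Finset.Ico_add_one_right_eq_Icc, Nat.sub_add_cancel (by omega : 1 ≤ p)]
    rw [hIcc]
    apply Finset.sum_congr rfl
    intro ℓ hℓ
    have hprodeq : ∏ j ∈ Finset.Icc 1 ℓ, (α - j) = ∏ j ∈ Finset.range ℓ, (β - j) := by
      rw [← Finset.Ico_add_one_right_eq_Icc, Finset.prod_Ico_eq_prod_range]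
      exact Finset.prod_congr rfl (fun j _ => by push_cast; rw [hβ]; ring)
    rw [hprodeq]
    have hexp : α - (ℓ:ℝ) - 1 = β - (ℓ:ℝ) := by rw [hβ]; ring
    rw [hexp]
    field_simp
  rw [htaylor, hsplit] at hmain
  rw [ge_iff_le, show α - 2 = β - 1 by rw [hβ]; ring]
  exact hmain
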